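/- Let r(n) denote the parity of the number of runs of 1's in the binary representation of n. Then for every k ≥ 1: if 0 ≤ n ≤ 2^(k-1) - 1 then r(n + 2^k) = 1 - r(n), and if 2^(k-1) ≤ n ≤ 2^k - 1 then r(n + 2^k) = r(n). -/

import Mathlib

/-- Digits of the negabinary (base -2) representation, least significant first. -/
def negaDigits (n : ℤ) : List ℕ :=
  if n = 0 then [] else (n % 2).toNat :: negaDigits ((n % 2 - n) / 2)
termination_by 2 * n.natAbs + (if n < 0 then 1 else 0)
decreasing_by split_ifs <;> omega

/-- Parity of the number of 1's in the negabinary representation of n. -/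
def g (n : ℕ) : ℕ := (negaDigits n).sum % 2

/-- The digit at position i in the negabinary representation. -/
def negaDigit (n : ℤ) (i : ℕ) : ℕ := (negaDigits n).getD i 0

/-- Number of runs (maximal blocks) of 1's in the binary representation of n. -/
def runsOfOnes (n : ℕ) : ℕ :=
  ((Finset.range (n + 1)).filter (fun i => n.testBit i ∧ ¬ n.testBit (i + 1))).card

/-- Parity of the number of runs of 1's in the binary representation of n. -/
def r (n : ℕ) : ℕ := runsOfOnes n % 2



lemma tb_low (k n : ℕ) (i : ℕ) (hi : i < k) : (n + 2 ^ k).testBit i = n.testBit i := by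
  have h : 2 ^ k = 2 ^ i * (2 * 2 ^ (k - i - 1)) := by
    rw [← pow_succ']; rw [← pow_add]; congr 1; omega
  rw [Nat.testBit_eq_decide_div_mod_eq, Nat.testBit_eq_decide_div_mod_eq, h,
    Nat.add_mul_div_left _ _ (Nat.two_pow_pos i), Nat.add_mul_mod_self_left]

lemma tb_k (k n : ℕ) (hn : n < 2 ^ k) : (n + 2 ^ k).testBit k = true := by
  rw [Nat.testBit_eq_decide_div_mod_eq]
  have : (n + 2 ^ k) / 2 ^ k = 1 := by
    rw [Nat.add_div_right _ (Nat.two_pow_pos k), Nat.div_eq_of_lt hn]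
  simp [this]

lemma tb_hi (k n : ℕ) (hn : n < 2 ^ k) (i : ℕ) (hi : k < i) : (n + 2 ^ k).testBit i = false := by
  apply Nat.testBit_eq_false_of_lt
  calc n + 2 ^ k < 2 ^ k + 2 ^ k := by omega
    _ = 2 ^ (k + 1) := by ring
    _ ≤ 2 ^ i := Nat.pow_le_pow_right (by norm_num) (by omega)

lemma main (k : ℕ) (hk : 1 ≤ k) (n : ℕ) (hn : n < 2 ^ k) :
    runsOfOnes (n + 2 ^ k) =
      if n.testBit (k - 1) then runsOfOnes n else runsOfOnes n + 1 := by
  set p : ℕ → Prop := fun i => n.testBit i ∧ ¬ n.testBit (i + 1) with hp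
  set m := n + 2 ^ k with hm
  have ntk : ∀ j, k ≤ j → n.testBit j = false := fun j hj =>
    Nat.testBit_eq_false_of_lt (lt_of_lt_of_le hn (Nat.pow_le_pow_right (by norm_num) hj))
  have hset : (Finset.range (m + 1)).filter (fun i => m.testBit i ∧ ¬ m.testBit (i + 1)) =
      insert k (((Finset.range (n + 1)).filter p).erase (k - 1)) := by
    ext i
    simp only [Finset.mem_filter, Finset.mem_range, Finset.mem_insert, Finset.mem_erase, hp]
    constructor
    · rintro ⟨hi, h1, h2⟩
      rcases lt_trichotomy i k with h | h | h
      · right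
        rw [tb_low k n i h] at h1
        have hik : i + 1 < k := by
          rcases Nat.lt_or_ge (i+1) k with h' | h'
          · exact h'
          · have : i + 1 = k := by omega
            subst this
            rw [tb_k _ _ hn] at h2; simp at h2
        rw [tb_low k n (i+1) hik] at h2
        have ha : 2 ^ i ≤ n := Nat.ge_two_pow_of_testBit h1
        have hb : i < 2 ^ i := Nat.lt_two_pow_self (n := i)
        exact ⟨by omega, by omega, h1, h2⟩
      · left; exact h
      · rw [tb_hi k n hn i h] at h1; simp at h1
    · rintro (h | ⟨hne, hi, h1, h2⟩)
      · rw [h]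
        refine ⟨by have := Nat.lt_two_pow_self (n := k); omega, tb_k _ _ hn, ?_⟩
        rw [tb_hi k n hn _ (by omega)]; simp
      · have hik : i < k := by
          by_contra h
          rw [ntk i (by omega)] at h1; simp at h1
        have hik1 : i + 1 < k := by
          rcases Nat.lt_or_ge (i+1) k with h' | h'
          · exact h'
          · omega
        refine ⟨by omega, ?_, ?_⟩
        · rw [tb_low k n i hik]; exact h1
        · rw [tb_low k n (i+1) hik1]; exact h2
  have hknot : k ∉ ((Finset.range (n + 1)).filter p).erase (k - 1) := by
    simp only [Finset.mem_erase, Finset.mem_filter, Finset.mem_range, hp]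
    rintro ⟨-, -, h1, -⟩
    rw [ntk k le_rfl] at h1; simp at h1
  have hcard : runsOfOnes m = (((Finset.range (n + 1)).filter p).erase (k - 1)).card + 1 := by
    rw [runsOfOnes, hset, Finset.card_insert_of_notMem hknot]
  by_cases hb : n.testBit (k - 1)
  · have hmem : k - 1 ∈ (Finset.range (n + 1)).filter p := by
      simp only [Finset.mem_filter, Finset.mem_range, hp]
      have ha : 2 ^ (k-1) ≤ n := Nat.ge_two_pow_of_testBit hb
      have hc : k - 1 < 2 ^ (k-1) := Nat.lt_two_pow_self
      have hk1 : k - 1 + 1 = k := by omega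
      refine ⟨by omega, hb, ?_⟩
      rw [hk1, ntk k le_rfl]; simp
    have hrn : ((Finset.range (n + 1)).filter p).card = runsOfOnes n := rfl
    rw [hcard, Finset.card_erase_of_mem hmem, if_pos hb]
    have : 0 < ((Finset.range (n + 1)).filter p).card := Finset.card_pos.2 ⟨_, hmem⟩
    omega
  · have : ((Finset.range (n + 1)).filter p).erase (k-1) = (Finset.range (n + 1)).filter p := by
      apply Finset.erase_eq_of_notMem
      simp only [Finset.mem_filter, Finset.mem_range, hp]
      rintro ⟨-, h1, -⟩; exact hb h1
    rw [hcard, this, if_neg hb]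
    rfl

theorem stmt2 (k : ℕ) (hk : 1 ≤ k) (n : ℕ) :
    (n ≤ 2 ^ (k - 1) - 1 → r (n + 2 ^ k) = 1 - r n) ∧
    (2 ^ (k - 1) ≤ n → n ≤ 2 ^ k - 1 → r (n + 2 ^ k) = r n) := by
  have h2k : 2 * 2 ^ (k - 1) = 2 ^ k := by
    rw [← pow_succ']; congr 1; omega
  have hpos := Nat.two_pow_pos (k - 1)
  constructor
  · intro h
    have hn : n < 2 ^ k := by omega
    have hb : n.testBit (k - 1) = false := Nat.testBit_eq_false_of_lt (by omega)
    have := main k hk n hn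
    rw [hb] at this
    simp only [if_neg Bool.false_ne_true] at this
    unfold r
    rw [this]
    omega
  · intro h1 h2
    have hn : n < 2 ^ k := by have := Nat.two_pow_pos k; omega
    have hb : n.testBit (k - 1) = true := by
      rw [Nat.testBit_eq_decide_div_mod_eq]
      have : n / 2 ^ (k-1) = 1 := Nat.div_eq_of_lt_le (by omega) (by omega)
      simp [this]
    have := main k hk n hn
    rw [hb] at this
    simp only [if_pos] at this
    unfold r
    rw [this]
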